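/- Every nonnegative Lagrange structure R ⊆ F × F* (a Lagrange structure on which e(f) ≥ 0 for all (f,e) ∈ R) is a maximally monotone structure. -/

import Mathlib

open Module

theorem nonneg_lagrange_is_maximally_monotone
    (F : Type*) [AddCommGroup F] [Module ℝ F] [FiniteDimensional ℝ F]
    (R : Submodule ℝ (F × Module.Dual ℝ F))
    (hR0 : ∀ p ∈ R, ∀ q ∈ R, p.2 q.1 - q.2 p.1 = 0)
    (hRmax : ∀ R' : Submodule ℝ (F × Module.Dual ℝ F),
        (∀ p ∈ R', ∀ q ∈ R', p.2 q.1 - q.2 p.1 = 0) → R ≤ R' → R' = R)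
    (hRpos : ∀ p ∈ R, (0 : ℝ) ≤ p.2 p.1) :
    (∀ p ∈ R, (0 : ℝ) ≤ p.2 p.1) ∧
      (∀ M' : Submodule ℝ (F × Module.Dual ℝ F),
        (∀ p ∈ M', (0 : ℝ) ≤ p.2 p.1) → R ≤ M' → M' = R) := by
  classical
  refine ⟨hRpos, fun M' hM'pos hRM' => ?_⟩
  set n := finrank ℝ F with hn
  -- the symplectic form
  let ω : LinearMap.BilinForm ℝ (F × Module.Dual ℝ F) :=
    LinearMap.mk₂ ℝ (fun p q => p.2 q.1 - q.2 p.1)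
      (by intro p p' q; simp; ring)
      (by intro c p q; simp; ring)
      (by intro p q q'; simp; ring)
      (by intro c p q; simp; ring)
  have hωapp : ∀ p q, ω p q = p.2 q.1 - q.2 p.1 := fun p q => rfl
  have hrefl : ω.IsRefl := by
    intro p q h
    rw [hωapp] at h ⊢; linarith
  have hnd : ω.Nondegenerate := by
    refine (LinearMap.IsRefl.nondegenerate_iff_separatingLeft hrefl).mpr ?_
    intro p hp
    have h1 : p.2 = 0 := by
      ext x
      have := hp (x, 0)
      simpa [hωapp] using this
    have h2 : p.1 = 0 := by
      rw [← Module.forall_dual_apply_eq_zero_iff ℝ]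
      intro e
      have := hp (0, e)
      simp [hωapp] at this
      simpa using this
    exact Prod.ext h2 h1
  -- total dimension
  have hVdim : finrank ℝ (F × Module.Dual ℝ F) = n + n := by
    rw [Module.finrank_prod, Subspace.dual_finrank_eq]
  -- R equals its own orthogonal
  have horthR : ω.orthogonal R = R := by
    apply le_antisymm
    · intro p hp
      rw [LinearMap.BilinForm.mem_orthogonal_iff] at hp
      -- R ⊔ span p is isotropic
      have hiso : ∀ x ∈ R ⊔ (ℝ ∙ p), ∀ y ∈ R ⊔ (ℝ ∙ p), x.2 y.1 - y.2 x.1 = 0 := by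
        intro x hx y hy
        rcases Submodule.mem_sup.mp hx with ⟨q, hq, s, hs, rfl⟩
        rcases Submodule.mem_sup.mp hy with ⟨q', hq', s', hs', rfl⟩
        rcases Submodule.mem_span_singleton.mp hs with ⟨c, rfl⟩
        rcases Submodule.mem_span_singleton.mp hs' with ⟨c', rfl⟩
        have e1 : ω q q' = 0 := by rw [hωapp]; exact hR0 q hq q' hq'
        have e2 : ω q p = 0 := hp q hq
        have e3 : ω q' p = 0 := hp q' hq'
        have e4 : ω p q' = 0 := hrefl _ _ e3
        have e5 : ω p p = 0 := by rw [hωapp]; ring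
        have e6 : ω p q = 0 := hrefl _ _ e2
        have : ω (q + c • p) (q' + c' • p) = 0 := by
          simp only [map_add, map_smul, LinearMap.add_apply, LinearMap.smul_apply,
            e1, e2, e4, e5, e6, smul_eq_mul, mul_zero, add_zero, zero_add]
        rw [hωapp] at this
        convert this using 2 <;> simp
      have := hRmax (R ⊔ (ℝ ∙ p)) hiso le_sup_left
      rw [← this]
      exact Submodule.mem_sup_right (Submodule.mem_span_singleton_self p)
    · intro q hq
      rw [LinearMap.BilinForm.mem_orthogonal_iff]
      intro r hr
      show ω r q = 0
      rw [hωapp]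
      exact hR0 r hr q hq
  -- dim R = n
  have hRdim : finrank ℝ R = n := by
    have h1 := LinearMap.BilinForm.finrank_orthogonal hnd R
    rw [horthR, hVdim] at h1
    have h2 : finrank ℝ R ≤ n + n := hVdim ▸ Submodule.finrank_le R
    omega
  -- dim M' ≤ n via negative-definite graph
  let b := Module.finBasis ℝ F
  let L : F →ₗ[ℝ] F × Module.Dual ℝ F := LinearMap.prod LinearMap.id (-b.toDual)
  have hLinj : Function.Injective L := by
    intro x y h
    exact congrArg Prod.fst h
  have hLdim : finrank ℝ (LinearMap.range L) = n := LinearMap.finrank_range_of_inj hLinj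
  have hquad : ∀ f : F, b.toDual f f = ∑ i, (b.repr f i) * (b.repr f i) := by
    intro f
    nth_rewrite 2 [← b.sum_repr f]
    rw [map_sum]
    exact Finset.sum_congr rfl fun i _ => by
      rw [map_smul, smul_eq_mul, b.toDual_eq_repr]
  have hdisj : M' ⊓ LinearMap.range L = ⊥ := by
    rw [Submodule.eq_bot_iff]
    rintro x ⟨hxM, f, rfl⟩
    have hpos := hM'pos _ hxM
    simp only [L, LinearMap.prod_apply, LinearMap.id_apply, Function.prod_apply, LinearMap.neg_apply] at hpos ⊢
    rw [hquad] at hpos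
    have hsum : ∑ i, (b.repr f i) * (b.repr f i) = 0 := by
      have : (0:ℝ) ≤ ∑ i, (b.repr f i) * (b.repr f i) :=
        Finset.sum_nonneg fun i _ => mul_self_nonneg _
      linarith
    have hf : f = 0 := by
      have := (Finset.sum_eq_zero_iff_of_nonneg
        (fun i _ => mul_self_nonneg (b.repr f i))).mp hsum
      apply b.repr.injective
      ext i
      simpa using mul_self_eq_zero.mp (this i (Finset.mem_univ i))
    simp [hf]
  have hM'dim : finrank ℝ M' ≤ n := by
    have := Submodule.finrank_sup_add_finrank_inf_eq M' (LinearMap.range L)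
    rw [hdisj, hLdim] at this
    have hle : finrank ℝ ↥(M' ⊔ LinearMap.range L) ≤ n + n :=
      hVdim ▸ Submodule.finrank_le _
    simp only [finrank_bot, add_zero] at this
    omega
  exact (Submodule.eq_of_le_of_finrank_le hRM' (by omega)).symm
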